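/- There exists a 2-factorization of the cocktail party graph K_24 − I having exactly 9 triangle-factors and 2 quadrangle-factors, which moreover is Q_24-regular: identifying the vertex set with the dicyclic group Q_24 of order 24 (so that K_24 − I = Cay[Q_24 : Q_24∖{1, a^6}], where a^6 is the unique involution of Q_24), left multiplication by every element of Q_24 is an automorphism of the graph permuting the 2-factors of the factorization. In other words, HWP(24; 3, 4; 9, 2) has a sharply-vertex-transitive solution. -/

import Mathlib

/-- `H` is a 2-factor of the simple graph `G`: a spanning 2-regular subgraph of `G`
(every vertex has exactly two neighbours in `H`). -/
def IsTwoFactor {V : Type*} (G H : SimpleGraph V) : Prop :=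
  H ≤ G ∧ ∀ v : V, (H.neighborSet v).ncard = 2

/-- `H` is a 2-factor of `G` all of whose connected components are cycles of length `n`:
since `H` is 2-regular, this is equivalent to requiring that every connected component
of `H` has exactly `n` vertices. For `n = 3` this is a triangle-factor, for `n = 4` a
quadrangle-factor. -/
def IsCycleFactor {V : Type*} (G H : SimpleGraph V) (n : ℕ) : Prop :=
  IsTwoFactor G H ∧ ∀ v : V, (H.connectedComponentMk v).supp.ncard = n

/-- `F` is a solution of the Hamilton--Waterloo problem HWP on the graph `G` with `r`
triangle-factors and `s` quadrangle-factors: the `r + s` factors `F i` are 2-factors of `G`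
whose edge sets partition the edge set of `G` (every edge of `G` lies in exactly one factor),
the first `r` of them being triangle-factors and the remaining `s` quadrangle-factors. -/
def IsHWPSolution {V : Type*} (G : SimpleGraph V) (r s : ℕ)
    (F : Fin (r + s) → SimpleGraph V) : Prop :=
  (∀ i : Fin (r + s), (i : ℕ) < r → IsCycleFactor G (F i) 3) ∧
  (∀ i : Fin (r + s), r ≤ (i : ℕ) → IsCycleFactor G (F i) 4) ∧
  (∀ e : Sym2 V, e ∈ G.edgeSet → ∃! i : Fin (r + s), e ∈ (F i).edgeSet)

/-- The Cayley graph `Cay[G : G ∖ {1, ι}]` of a group `G` with connection set the complement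
of `{1, ι}`: two vertices `x, y` are adjacent iff `x ≠ y` and `x⁻¹ * y ∉ {ι, ι⁻¹}`.
When `ι` is an involution this is the complete graph on `G` minus the perfect matching
`{{x, x * ι} | x ∈ G}`, i.e. the cocktail party graph `K_|G| - I`. -/
def cocktailCayley (G : Type*) [Group G] (ι : G) : SimpleGraph G where
  Adj x y := x ≠ y ∧ x⁻¹ * y ≠ ι ∧ y⁻¹ * x ≠ ι
  symm := ⟨fun _ _ h => ⟨h.1.symm, h.2.2, h.2.1⟩⟩
  loopless := ⟨fun _ h => h.1 rfl⟩

namespace HWP24Aux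

abbrev Q : Type := QuaternionGroup 6

/-- The cocktail party graph `K_24 - I` on `Q_24`. -/
abbrev Gc : SimpleGraph Q := cocktailCayley Q (QuaternionGroup.a 6)

instance : DecidableRel Gc.Adj := fun x y =>
  inferInstanceAs (Decidable (x ≠ y ∧ x⁻¹ * y ≠ QuaternionGroup.a 6 ∧
    y⁻¹ * x ≠ QuaternionGroup.a 6))

/-- Encoding of `Q_24` as `0..23`. -/
def enc : Q → ℕ
  | .a i => i.val
  | .xa i => 12 + i.val

/-- Decoding of `0..23` into `Q_24`. -/
def dec (n : ℕ) : Q :=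
  if n < 12 then QuaternionGroup.a (n : ZMod (2 * 6))
  else QuaternionGroup.xa ((n - 12 : ℕ) : ZMod (2 * 6))

def colTab : List (List Nat) :=
  [[11, 8, 4, 4, 0, 5, 11, 6, 2, 7, 8, 7, 1, 9, 0, 6, 3, 10, 2, 9, 1, 3, 5, 10],
   [8, 11, 3, 5, 5, 1, 6, 11, 7, 0, 8, 3, 9, 1, 7, 4, 10, 0, 9, 2, 4, 6, 10, 2],
   [4, 3, 11, 4, 6, 6, 2, 7, 11, 8, 1, 3, 2, 8, 5, 10, 1, 9, 0, 5, 7, 10, 0, 9],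
   [4, 5, 4, 11, 5, 7, 7, 0, 8, 11, 3, 2, 3, 6, 10, 2, 9, 1, 6, 8, 10, 1, 9, 0],
   [0, 5, 6, 5, 11, 6, 8, 8, 1, 3, 11, 4, 7, 10, 0, 9, 2, 7, 3, 10, 2, 9, 1, 4],
   [5, 1, 6, 7, 6, 11, 7, 3, 3, 2, 4, 11, 10, 1, 9, 0, 8, 4, 10, 0, 9, 2, 5, 8],
   [11, 6, 2, 7, 8, 7, 11, 8, 4, 4, 0, 5, 2, 9, 1, 3, 5, 10, 1, 9, 0, 6, 3, 10],
   [6, 11, 7, 0, 8, 3, 8, 11, 3, 5, 5, 1, 9, 2, 4, 6, 10, 2, 9, 1, 7, 4, 10, 0],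
   [2, 7, 11, 8, 1, 3, 4, 3, 11, 4, 6, 6, 0, 5, 7, 10, 0, 9, 2, 8, 5, 10, 1, 9],
   [7, 0, 8, 11, 3, 2, 4, 5, 4, 11, 5, 7, 6, 8, 10, 1, 9, 0, 3, 6, 10, 2, 9, 1],
   [8, 8, 1, 3, 11, 4, 0, 5, 6, 5, 11, 6, 3, 10, 2, 9, 1, 4, 7, 10, 0, 9, 2, 7],
   [7, 3, 3, 2, 4, 11, 5, 1, 6, 7, 6, 11, 10, 0, 9, 2, 5, 8, 10, 1, 9, 0, 8, 4],
   [1, 9, 2, 3, 7, 10, 2, 9, 0, 6, 3, 10, 11, 4, 8, 8, 0, 7, 11, 6, 1, 5, 4, 5],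
   [9, 1, 8, 6, 10, 1, 9, 2, 5, 8, 10, 0, 4, 11, 3, 7, 7, 2, 6, 11, 5, 0, 4, 3],
   [0, 7, 5, 10, 0, 9, 1, 4, 7, 10, 2, 9, 8, 3, 11, 8, 6, 6, 1, 5, 11, 4, 2, 3],
   [6, 4, 10, 2, 9, 0, 3, 6, 10, 1, 9, 2, 8, 7, 8, 11, 7, 5, 5, 0, 4, 11, 3, 1],
   [3, 10, 1, 9, 2, 8, 5, 10, 0, 9, 1, 5, 0, 7, 6, 7, 11, 6, 4, 4, 2, 3, 11, 8],
   [10, 0, 9, 1, 7, 4, 10, 2, 9, 0, 4, 8, 7, 2, 6, 5, 6, 11, 5, 3, 3, 1, 8, 11],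
   [2, 9, 0, 6, 3, 10, 1, 9, 2, 3, 7, 10, 11, 6, 1, 5, 4, 5, 11, 4, 8, 8, 0, 7],
   [9, 2, 5, 8, 10, 0, 9, 1, 8, 6, 10, 1, 6, 11, 5, 0, 4, 3, 4, 11, 3, 7, 7, 2],
   [1, 4, 7, 10, 2, 9, 0, 7, 5, 10, 0, 9, 1, 5, 11, 4, 2, 3, 8, 3, 11, 8, 6, 6],
   [3, 6, 10, 1, 9, 2, 6, 4, 10, 2, 9, 0, 5, 0, 4, 11, 3, 1, 8, 7, 8, 11, 7, 5],
   [5, 10, 0, 9, 1, 5, 3, 10, 1, 9, 2, 8, 4, 4, 2, 3, 11, 8, 0, 7, 6, 7, 11, 6],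
   [10, 2, 9, 0, 4, 8, 10, 0, 9, 1, 7, 4, 5, 3, 3, 1, 8, 11, 7, 2, 6, 5, 6, 11]]

def w1Tab : List (List Nat) :=
  [[4, 9, 22, 7, 0, 15, 10, 3, 12, 17, 6, 13, 16, 21, 4, 5, 12, 9, 22, 15, 10, 13, 2, 7],
   [12, 5, 10, 17, 22, 1, 14, 11, 22, 23, 16, 7, 0, 5, 18, 23, 10, 21, 14, 7, 0, 17, 8, 15],
   [8, 19, 12, 15, 16, 9, 12, 13, 0, 5, 22, 15, 2, 17, 22, 11, 20, 13, 0, 1, 16, 9, 14, 19],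
   [21, 2, 1, 12, 18, 7, 22, 5, 7, 4, 12, 2, 10, 14, 23, 22, 21, 19, 4, 17, 17, 0, 6, 14],
   [2, 15, 0, 0, 11, 17, 8, 21, 6, 8, 17, 4, 22, 12, 7, 1, 19, 5, 16, 16, 15, 7, 12, 11],
   [5, 3, 14, 4, 3, 0, 16, 10, 20, 7, 7, 6, 21, 8, 2, 18, 6, 18, 15, 2, 8, 23, 5, 21],
   [7, 21, 5, 13, 5, 2, 1, 0, 10, 12, 8, 8, 19, 3, 17, 0, 17, 14, 3, 12, 22, 1, 20, 20],
   [9, 14, 7, 6, 12, 3, 3, 2, 1, 11, 18, 9, 4, 15, 1, 13, 13, 4, 23, 21, 7, 19, 21, 18],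
   [1, 0, 9, 19, 7, 23, 7, 4, 3, 13, 0, 17, 14, 9, 12, 14, 23, 11, 20, 3, 21, 20, 17, 5],
   [13, 18, 17, 16, 21, 20, 19, 18, 23, 16, 15, 20, 1, 0, 11, 10, 3, 2, 7, 6, 11, 4, 3, 2],
   [23, 16, 21, 20, 19, 18, 17, 22, 21, 20, 19, 12, 11, 4, 3, 2, 1, 0, 5, 4, 9, 2, 7, 0]]

def w2Tab : List (List Nat) :=
  [[14, 17, 18, 23, 14, 19, 20, 23, 16, 1, 20, 21, 8, 11, 0, 19, 8, 1, 2, 5, 6, 11, 18, 3],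
   [20, 13, 16, 21, 8, 13, 18, 19, 4, 15, 2, 19, 20, 1, 6, 9, 2, 3, 6, 11, 12, 3, 4, 9],
   [18, 23, 6, 11, 20, 21, 2, 17, 18, 21, 14, 3, 6, 7, 10, 3, 4, 7, 8, 23, 4, 5, 10, 1],
   [16, 11, 11, 10, 9, 8, 15, 8, 5, 18, 3, 1, 3, 23, 13, 6, 0, 20, 9, 20, 19, 16, 15, 13],
   [3, 20, 3, 2, 23, 10, 9, 14, 9, 6, 5, 23, 13, 22, 21, 20, 18, 10, 19, 18, 1, 14, 13, 4],
   [22, 4, 19, 1, 1, 22, 11, 9, 13, 10, 9, 16, 23, 20, 19, 17, 11, 15, 17, 14, 13, 12, 0, 12],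
   [15, 6, 4, 18, 2, 4, 21, 15, 11, 19, 11, 10, 9, 18, 16, 7, 14, 16, 13, 9, 23, 6, 23, 22],
   [11, 8, 20, 5, 17, 6, 5, 20, 14, 0, 23, 0, 17, 16, 8, 16, 15, 12, 10, 22, 2, 22, 19, 10],
   [10, 10, 13, 8, 6, 16, 4, 6, 19, 2, 1, 22, 15, 2, 15, 12, 5, 22, 21, 8, 18, 18, 11, 16],
   [19, 12, 23, 22, 15, 14, 13, 12, 17, 22, 21, 14, 7, 6, 5, 4, 9, 8, 1, 0, 5, 10, 9, 8],
   [17, 22, 15, 14, 13, 12, 23, 16, 15, 14, 13, 18, 5, 10, 9, 8, 7, 6, 11, 10, 3, 8, 1, 6]]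

def w3Tab : List (List Nat) :=
  [[0, 0, 0, 0, 0, 0, 0, 0, 0, 0, 0, 0, 0, 0, 0, 0, 0, 0, 0, 0, 0, 0, 0, 0],
   [0, 0, 0, 0, 0, 0, 0, 0, 0, 0, 0, 0, 0, 0, 0, 0, 0, 0, 0, 0, 0, 0, 0, 0],
   [0, 0, 0, 0, 0, 0, 0, 0, 0, 0, 0, 0, 0, 0, 0, 0, 0, 0, 0, 0, 0, 0, 0, 0],
   [0, 0, 0, 0, 0, 0, 0, 0, 0, 0, 0, 0, 0, 0, 0, 0, 0, 0, 0, 0, 0, 0, 0, 0],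
   [0, 0, 0, 0, 0, 0, 0, 0, 0, 0, 0, 0, 0, 0, 0, 0, 0, 0, 0, 0, 0, 0, 0, 0],
   [0, 0, 0, 0, 0, 0, 0, 0, 0, 0, 0, 0, 0, 0, 0, 0, 0, 0, 0, 0, 0, 0, 0, 0],
   [0, 0, 0, 0, 0, 0, 0, 0, 0, 0, 0, 0, 0, 0, 0, 0, 0, 0, 0, 0, 0, 0, 0, 0],
   [0, 0, 0, 0, 0, 0, 0, 0, 0, 0, 0, 0, 0, 0, 0, 0, 0, 0, 0, 0, 0, 0, 0, 0],
   [0, 0, 0, 0, 0, 0, 0, 0, 0, 0, 0, 0, 0, 0, 0, 0, 0, 0, 0, 0, 0, 0, 0, 0],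
   [6, 7, 8, 9, 10, 11, 0, 1, 2, 3, 4, 5, 18, 19, 20, 21, 22, 23, 12, 13, 14, 15, 16, 17],
   [6, 7, 8, 9, 10, 11, 0, 1, 2, 3, 4, 5, 18, 19, 20, 21, 22, 23, 12, 13, 14, 15, 16, 17]]

def tauA : List Nat := [2, 0, 1, 8, 3, 4, 5, 6, 7, 9, 10, 11]
def tauX : List Nat := [0, 2, 1, 3, 8, 7, 6, 5, 4, 9, 10, 11]

def sigmaA : Equiv.Perm (Fin 11) :=
  ⟨![1, 2, 0, 4, 5, 6, 7, 8, 3, 9, 10], ![2, 0, 1, 8, 3, 4, 5, 6, 7, 9, 10], by decide, by decide⟩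

def sigmaX : Equiv.Perm (Fin 11) :=
  ⟨![0, 2, 1, 3, 8, 7, 6, 5, 4, 9, 10], ![0, 2, 1, 3, 8, 7, 6, 5, 4, 9, 10], by decide, by decide⟩

/-- The colouring of the edges of `K_24 - I` by the 11 factors (value `11` on non-edges). -/
def col (x y : Q) : ℕ := (colTab.getD (enc x) []).getD (enc y) 11

lemma col_symm : ∀ x y : Q, col x y = col y x := by decide

/-- The 11 two-factors. -/
def Fac : Fin 11 → SimpleGraph Q := fun k =>
  { Adj := fun x y => Gc.Adj x y ∧ col x y = k.val
    symm := ⟨fun x y h => ⟨h.1.symm, (col_symm y x).trans h.2⟩⟩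
    loopless := ⟨fun x h => h.1.ne rfl⟩ }

instance instFacAdjDec (k : Fin 11) : DecidableRel (Fac k).Adj := fun x y =>
  inferInstanceAs (Decidable (Gc.Adj x y ∧ col x y = k.val))

def w1f (k : Fin 11) (v : Q) : Q := dec ((w1Tab.getD k.val []).getD (enc v) 0)
def w2f (k : Fin 11) (v : Q) : Q := dec ((w2Tab.getD k.val []).getD (enc v) 0)
def w3f (k : Fin 11) (v : Q) : Q := dec ((w3Tab.getD k.val []).getD (enc v) 0)

section Generic

variable {V : Type*} [Fintype V] [DecidableEq V]

lemma closed_walk (H : SimpleGraph V) (S : Set V)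
    (hS : ∀ u ∈ S, ∀ z, H.Adj u z → z ∈ S) {u w : V} (p : H.Walk u w) :
    u ∈ S → w ∈ S := by
  induction p with
  | nil => exact id
  | cons h _ ih => exact fun hu => ih (hS _ hu _ h)

lemma supp_eq_of_closed (H : SimpleGraph V) (v : V) (S : Set V) (hv : v ∈ S)
    (hcl : ∀ u ∈ S, ∀ z, H.Adj u z → z ∈ S)
    (hre : ∀ u ∈ S, H.Reachable v u) :
    (H.connectedComponentMk v).supp = S := by
  ext u
  rw [SimpleGraph.ConnectedComponent.mem_supp_iff, SimpleGraph.ConnectedComponent.eq]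
  constructor
  · intro h
    obtain ⟨p⟩ := h.symm
    exact closed_walk H S hcl p hv
  · intro hu
    exact (hre u hu).symm

lemma nbr_eq (H : SimpleGraph V) [DecidableRel H.Adj] {v x y : V}
    (hdeg : (Finset.univ.filter (H.Adj v)).card = 2)
    (hx : H.Adj v x) (hy : H.Adj v y) (hxy : x ≠ y) :
    ∀ z, H.Adj v z → z = x ∨ z = y := by
  intro z hz
  by_contra hc
  push_neg at hc
  have hsub : ({z, x, y} : Finset V) ⊆ Finset.univ.filter (H.Adj v) := by
    intro t ht
    simp only [Finset.mem_insert, Finset.mem_singleton] at ht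
    rcases ht with rfl | rfl | rfl <;> simp [hz, hx, hy]
  have h3 : ({z, x, y} : Finset V).card = 3 := by
    rw [Finset.card_insert_of_notMem (by simp [hc.1, hc.2]),
      Finset.card_insert_of_notMem (by simp [hxy]), Finset.card_singleton]
  have hle := Finset.card_le_card hsub
  rw [hdeg, h3] at hle
  omega

lemma two_regular (H : SimpleGraph V) [DecidableRel H.Adj]
    (hdeg : ∀ v, (Finset.univ.filter (H.Adj v)).card = 2) :
    ∀ v, (H.neighborSet v).ncard = 2 := by
  intro v
  have h : H.neighborSet v = ↑(Finset.univ.filter (H.Adj v)) := by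
    ext z; simp [SimpleGraph.mem_neighborSet]
  rw [h, Set.ncard_coe_finset, hdeg]

lemma isCycleFactor_three (G H : SimpleGraph V) [DecidableRel H.Adj]
    (hle : H ≤ G)
    (hdeg : ∀ v, (Finset.univ.filter (H.Adj v)).card = 2)
    (w1 w2 : V → V)
    (hw : ∀ v, H.Adj v (w1 v) ∧ H.Adj v (w2 v) ∧ H.Adj (w1 v) (w2 v)) :
    IsCycleFactor G H 3 := by
  refine ⟨⟨hle, two_regular H hdeg⟩, ?_⟩
  intro v
  obtain ⟨h1, h2, h12⟩ := hw v
  have hxy : w1 v ≠ w2 v := H.ne_of_adj h12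
  have hvx : v ≠ w1 v := H.ne_of_adj h1
  have hvy : v ≠ w2 v := H.ne_of_adj h2
  have hsupp : (H.connectedComponentMk v).supp = {v, w1 v, w2 v} := by
    apply supp_eq_of_closed
    · exact Set.mem_insert _ _
    · intro u hu z hz
      simp only [Set.mem_insert_iff, Set.mem_singleton_iff] at hu ⊢
      rcases hu with rfl | rfl | rfl
      · rcases nbr_eq H (hdeg u) h1 h2 hxy z hz with rfl | rfl
        · exact Or.inr (Or.inl rfl)
        · exact Or.inr (Or.inr rfl)
      · rcases nbr_eq H (hdeg (w1 v)) h1.symm h12 hvy z hz with rfl | rfl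
        · exact Or.inl rfl
        · exact Or.inr (Or.inr rfl)
      · rcases nbr_eq H (hdeg (w2 v)) h2.symm h12.symm hvx z hz with rfl | rfl
        · exact Or.inl rfl
        · exact Or.inr (Or.inl rfl)
    · intro u hu
      simp only [Set.mem_insert_iff, Set.mem_singleton_iff] at hu
      rcases hu with rfl | rfl | rfl
      · exact SimpleGraph.Reachable.refl _
      · exact h1.reachable
      · exact h2.reachable
  rw [hsupp]
  exact Set.ncard_eq_three.mpr ⟨v, w1 v, w2 v, hvx, hvy, hxy, rfl⟩

lemma isCycleFactor_four (G H : SimpleGraph V) [DecidableRel H.Adj]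
    (hle : H ≤ G)
    (hdeg : ∀ v, (Finset.univ.filter (H.Adj v)).card = 2)
    (w1 w2 w3 : V → V)
    (hw : ∀ v, H.Adj v (w1 v) ∧ H.Adj v (w2 v) ∧ H.Adj (w1 v) (w3 v) ∧
      H.Adj (w2 v) (w3 v) ∧ w1 v ≠ w2 v ∧ v ≠ w3 v) :
    IsCycleFactor G H 4 := by
  refine ⟨⟨hle, two_regular H hdeg⟩, ?_⟩
  intro v
  obtain ⟨h1, h2, h3, h4, hxy, hvz⟩ := hw v
  have hvx : v ≠ w1 v := H.ne_of_adj h1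
  have hvy : v ≠ w2 v := H.ne_of_adj h2
  have hxz : w1 v ≠ w3 v := H.ne_of_adj h3
  have hyz : w2 v ≠ w3 v := H.ne_of_adj h4
  have hsupp : (H.connectedComponentMk v).supp = {v, w1 v, w2 v, w3 v} := by
    apply supp_eq_of_closed
    · exact Set.mem_insert _ _
    · intro u hu z hz
      simp only [Set.mem_insert_iff, Set.mem_singleton_iff] at hu ⊢
      rcases hu with rfl | rfl | rfl | rfl
      · rcases nbr_eq H (hdeg u) h1 h2 hxy z hz with rfl | rfl
        · exact Or.inr (Or.inl rfl)
        · exact Or.inr (Or.inr (Or.inl rfl))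
      · rcases nbr_eq H (hdeg (w1 v)) h1.symm h3 hvz z hz with rfl | rfl
        · exact Or.inl rfl
        · exact Or.inr (Or.inr (Or.inr rfl))
      · rcases nbr_eq H (hdeg (w2 v)) h2.symm h4 hvz z hz with rfl | rfl
        · exact Or.inl rfl
        · exact Or.inr (Or.inr (Or.inr rfl))
      · rcases nbr_eq H (hdeg (w3 v)) h3.symm h4.symm hxy z hz with rfl | rfl
        · exact Or.inr (Or.inl rfl)
        · exact Or.inr (Or.inr (Or.inl rfl))
    · intro u hu
      simp only [Set.mem_insert_iff, Set.mem_singleton_iff] at hu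
      rcases hu with rfl | rfl | rfl | rfl
      · exact SimpleGraph.Reachable.refl _
      · exact h1.reachable
      · exact h2.reachable
      · exact h1.reachable.trans h3.reachable
  rw [hsupp]
  have hv : v ∉ ({w1 v, w2 v, w3 v} : Set V) := by
    simp [Set.mem_insert_iff, hvx, hvy, hvz]
  have hx : w1 v ∉ ({w2 v, w3 v} : Set V) := by
    simp [Set.mem_insert_iff, hxy, hxz]
  have hy : w2 v ∉ ({w3 v} : Set V) := by simp [hyz]
  rw [Set.ncard_insert_of_notMem hv, Set.ncard_insert_of_notMem hx,
    Set.ncard_insert_of_notMem hy, Set.ncard_singleton]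

lemma map_adj_equiv {α β : Type*} (H : SimpleGraph α) (e : α ≃ β) (x y : β) :
    (H.map e.toEmbedding).Adj x y ↔ H.Adj (e.symm x) (e.symm y) := by
  constructor
  · rintro ⟨-, a, b, hab, rfl, rfl⟩
    simpa using hab
  · intro h
    exact ⟨fun hxy => h.ne (by rw [hxy]), e.symm x, e.symm y, h, e.apply_symm_apply x, e.apply_symm_apply y⟩

end Generic

lemma Gc_adj_mul (g x y : Q) : Gc.Adj (g * x) (g * y) ↔ Gc.Adj x y := by
  have h1 : (g * x)⁻¹ * (g * y) = x⁻¹ * y := by group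
  have h2 : (g * y)⁻¹ * (g * x) = y⁻¹ * x := by group
  show ((g * x ≠ g * y) ∧ _ ∧ _) ↔ ((x ≠ y) ∧ _ ∧ _)
  rw [h1, h2, ne_eq, mul_right_inj, ← ne_eq]

lemma col_lt : ∀ x y : Q, Gc.Adj x y → col x y < 11 := by decide

lemma fac_deg : ∀ k : Fin 11, ∀ v : Q,
    (Finset.univ.filter ((Fac k).Adj v)).card = 2 := by decide

lemma hw_tri : ∀ k : Fin 11, k.val < 9 → ∀ v : Q,
    (Fac k).Adj v (w1f k v) ∧ (Fac k).Adj v (w2f k v) ∧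
    (Fac k).Adj (w1f k v) (w2f k v) := by decide

lemma hw_quad : ∀ k : Fin 11, 9 ≤ k.val → ∀ v : Q,
    (Fac k).Adj v (w1f k v) ∧ (Fac k).Adj v (w2f k v) ∧
    (Fac k).Adj (w1f k v) (w3f k v) ∧ (Fac k).Adj (w2f k v) (w3f k v) ∧
    w1f k v ≠ w2f k v ∧ v ≠ w3f k v := by decide

def gA : Q := QuaternionGroup.a 1
def gX : Q := QuaternionGroup.xa 0

lemma colA : ∀ x y : Q, col (gA⁻¹ * x) (gA⁻¹ * y) = tauA.getD (col x y) 11 := by decide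
lemma colX : ∀ x y : Q, col (gX⁻¹ * x) (gX⁻¹ * y) = tauX.getD (col x y) 11 := by decide

lemma bridgeA : ∀ c i : Fin 11, tauA.getD c.val 11 = i.val ↔ c = sigmaA i := by decide
lemma bridgeX : ∀ c i : Fin 11, tauX.getD c.val 11 = i.val ↔ c = sigmaX i := by decide

lemma map_fac_gen (g : Q) (tau : List ℕ) (sigma : Equiv.Perm (Fin 11))
    (hcol : ∀ x y : Q, col (g⁻¹ * x) (g⁻¹ * y) = tau.getD (col x y) 11)
    (hbr : ∀ c i : Fin 11, tau.getD c.val 11 = i.val ↔ c = sigma i) :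
    ∀ i : Fin 11, (Fac i).map (Equiv.mulLeft g).toEmbedding = Fac (sigma i) := by
  intro i
  refine SimpleGraph.ext ?_
  funext x y
  apply propext
  rw [map_adj_equiv]
  have hsx : (Equiv.mulLeft g).symm x = g⁻¹ * x := by
    rw [Equiv.mulLeft_symm]; rfl
  have hsy : (Equiv.mulLeft g).symm y = g⁻¹ * y := by
    rw [Equiv.mulLeft_symm]; rfl
  rw [hsx, hsy]
  have hA : Gc.Adj (g⁻¹ * x) (g⁻¹ * y) ↔ Gc.Adj x y := Gc_adj_mul g⁻¹ x y
  show (Gc.Adj (g⁻¹ * x) (g⁻¹ * y) ∧ col (g⁻¹ * x) (g⁻¹ * y) = i.val) ↔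
    (Gc.Adj x y ∧ col x y = (sigma i).val)
  rw [hcol x y]
  constructor
  · rintro ⟨ha, hc⟩
    have ha' := hA.mp ha
    have hlt := col_lt x y ha'
    have heq : (⟨col x y, hlt⟩ : Fin 11) = sigma i := (hbr ⟨col x y, hlt⟩ i).mp hc
    exact ⟨ha', congrArg Fin.val heq⟩
  · rintro ⟨ha, hc⟩
    have hlt := col_lt x y ha
    exact ⟨hA.mpr ha, (hbr ⟨col x y, hlt⟩ i).mpr (Fin.ext hc)⟩

/-- The key regularity property. -/
def PP (g : Q) : Prop :=
  ∃ σ : Equiv.Perm (Fin 11), ∀ i : Fin 11,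
    (Fac i).map (Equiv.mulLeft g).toEmbedding = Fac (σ i)

lemma PP_one : PP 1 := by
  refine ⟨1, fun i => ?_⟩
  refine SimpleGraph.ext ?_
  funext x y
  apply propext
  rw [map_adj_equiv]
  have hx : (Equiv.mulLeft (1 : Q)).symm x = x := by
    rw [Equiv.mulLeft_symm]; show (1 : Q)⁻¹ * x = x; simp
  have hy : (Equiv.mulLeft (1 : Q)).symm y = y := by
    rw [Equiv.mulLeft_symm]; show (1 : Q)⁻¹ * y = y; simp
  rw [hx, hy]
  rfl

lemma PP_mul {g h : Q} (hg : PP g) (hh : PP h) : PP (g * h) := by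
  obtain ⟨σg, hσg⟩ := hg
  obtain ⟨σh, hσh⟩ := hh
  refine ⟨σh.trans σg, fun i => ?_⟩
  have he : Equiv.mulLeft (g * h) = (Equiv.mulLeft h).trans (Equiv.mulLeft g) := by
    ext z
    simp [mul_assoc]
  have hemb : ((Equiv.mulLeft h).trans (Equiv.mulLeft g)).toEmbedding =
      (Equiv.mulLeft h).toEmbedding.trans (Equiv.mulLeft g).toEmbedding := rfl
  rw [he, hemb, Function.Embedding.coe_trans, ← SimpleGraph.map_map, hσh i, hσg (σh i)]
  rfl

lemma PP_all : ∀ g : Q, PP g := by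
  have hA : PP gA := ⟨sigmaA, map_fac_gen gA tauA sigmaA colA bridgeA⟩
  have hX : PP gX := ⟨sigmaX, map_fac_gen gX tauX sigmaX colX bridgeX⟩
  have hpow : ∀ n : ℕ, PP (gA ^ n) := by
    intro n
    induction n with
    | zero => rw [pow_zero]; exact PP_one
    | succ m ih => rw [pow_succ]; exact PP_mul ih hA
  haveI : NeZero (2 * 6) := ⟨by norm_num⟩
  have ha : ∀ i : ZMod (2 * 6), PP (QuaternionGroup.a i) := by
    intro i
    have h := hpow i.val
    rw [show (gA ^ i.val : Q) = QuaternionGroup.a i by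
      rw [gA, QuaternionGroup.a_one_pow]
      exact congrArg QuaternionGroup.a (ZMod.natCast_rightInverse i)] at h
    exact h
  have hxa : ∀ i : ZMod (2 * 6), PP (QuaternionGroup.xa i) := by
    intro i
    have hrep : (QuaternionGroup.xa i : Q) = QuaternionGroup.a (-i) * QuaternionGroup.xa 0 := by
      rw [QuaternionGroup.a_mul_xa]
      norm_num
    rw [hrep]
    exact PP_mul (ha (-i)) hX
  intro g
  cases g with
  | a i => exact ha i
  | xa i => exact hxa i

end HWP24Aux

open HWP24Aux in
/-- HWP(24; 3, 4; 9, 2) has a sharply-vertex-transitive solution: there is a 2-factorization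
of the cocktail party graph `K_24 - I = Cay[Q_24 : Q_24 ∖ {1, a^6}]` on the dicyclic group
`Q_24` of order 24 (here `QuaternionGroup 6`, whose unique involution is `a^6`) with exactly
9 triangle-factors and 2 quadrangle-factors, such that left multiplication by every element
of `Q_24` permutes the 2-factors. -/
theorem hwp24_dicyclic_regular_9_2 :
    ∃ F : Fin (9 + 2) → SimpleGraph (QuaternionGroup 6),
      IsHWPSolution (cocktailCayley (QuaternionGroup 6) (QuaternionGroup.a 6)) 9 2 F ∧
      ∀ g : QuaternionGroup 6, ∃ σ : Equiv.Perm (Fin (9 + 2)),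
        ∀ i : Fin (9 + 2),
          (F i).map (Equiv.mulLeft g).toEmbedding = F (σ i) := by
  refine ⟨Fac, ⟨?_, ?_, ?_⟩, PP_all⟩
  · intro i hi
    exact isCycleFactor_three Gc (Fac i) (fun _ _ h => h.1) (fac_deg i)
      (w1f i) (w2f i) (hw_tri i hi)
  · intro i hi
    exact isCycleFactor_four Gc (Fac i) (fun _ _ h => h.1) (fac_deg i)
      (w1f i) (w2f i) (w3f i) (hw_quad i hi)
  · intro e
    refine Sym2.ind (fun x y => ?_) e
    intro he
    rw [SimpleGraph.mem_edgeSet] at he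
    have hlt := col_lt x y he
    refine ⟨⟨col x y, hlt⟩, ?_, ?_⟩
    · show s(x, y) ∈ (Fac ⟨col x y, hlt⟩).edgeSet
      rw [SimpleGraph.mem_edgeSet]
      exact ⟨he, rfl⟩
    · intro j hj
      simp only [SimpleGraph.mem_edgeSet] at hj
      exact Fin.ext hj.2.symm
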